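/- Fix α ∈ ℝ and let α − S := {α − s : s ∈ S}. For every Borel measurable function f : ℝ² → [0, ∞] and every θ ∈ ℝ, one has E[ f(L^{θ}_{α−S}, R^{θ}_{α−S}) ] = E[ f(α − R^{α−θ}_{S}, α − L^{α−θ}_{S}) ]; that is, the stepping-out distribution for the set α − S started at θ equals the pushforward under (ℓ, r) ↦ (α − r, α − ℓ) of the stepping-out distribution for S started at α − θ. -/
import Mathlib

open MeasureTheory ProbabilityTheory Set
open scoped ENNReal

/-- The left stepping-out points `L^x_{B,i} := x − u − (i − 1)·w`. -/
noncomputable def Lpt (x u w : ℝ) (i : ℕ) : ℝ := x - u - ((i : ℝ) - 1) * w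

/-- The right stepping-out points `R^x_{B,i} := x − u + i·w`. -/
noncomputable def Rpt (x u w : ℝ) (i : ℕ) : ℝ := x - u + i * w

/-- The left endpoint `L^x_B := L^x_{B,τ}` of the stepping-out procedure with `m = ∞`,
where `τ := inf{i ≥ 1 : L^x_{B,i} ∉ B}`. -/
noncomputable def Lout (B : Set ℝ) (x u w : ℝ) : ℝ :=
  Lpt x u w (sInf {i : ℕ | 1 ≤ i ∧ Lpt x u w i ∉ B})

/-- The right endpoint `R^x_B := R^x_{B,𝔗}` of the stepping-out procedure with `m = ∞`,
where `𝔗 := inf{i ≥ 1 : R^x_{B,i} ∉ B}`. -/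
noncomputable def Rout (B : Set ℝ) (x u w : ℝ) : ℝ :=
  Rpt x u w (sInf {i : ℕ | 1 ≤ i ∧ Rpt x u w i ∉ B})

lemma sInf_nat_eq_iff (s : Set ℕ) (n : ℕ) :
    sInf s = n ↔ (n ∈ s ∧ ∀ m < n, m ∉ s) ∨ (n = 0 ∧ ∀ i, i ∉ s) := by
  constructor
  · intro h
    rcases s.eq_empty_or_nonempty with rfl | hne
    · right; simp [Nat.sInf_empty] at h ⊢; omega
    · left
      exact ⟨h ▸ Nat.sInf_mem hne, fun m hm => Nat.notMem_of_lt_sInf (h ▸ hm)⟩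
  · rintro (⟨hn, hmin⟩ | ⟨rfl, hemp⟩)
    · refine le_antisymm (Nat.sInf_le hn) ?_
      by_contra hlt
      push_neg at hlt
      exact hmin _ hlt (Nat.sInf_mem ⟨n, hn⟩)
    · have : s = ∅ := Set.eq_empty_iff_forall_notMem.mpr hemp
      simp [this]

lemma measurable_sInf_set {p : ℕ → ℝ → Prop} (hp : ∀ i, MeasurableSet {u | p i u}) :
    Measurable fun u => sInf {i | p i u} := by
  apply measurable_to_countable'
  intro n
  have : (fun u => sInf {i | p i u}) ⁻¹' {n}
      = ({u | p n u} ∩ ⋂ m ∈ Finset.range n, {u | p m u}ᶜ)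
        ∪ ({u | n = 0} ∩ ⋂ i, {u | p i u}ᶜ) := by
    ext u
    simp only [mem_preimage, mem_singleton_iff, sInf_nat_eq_iff, Set.mem_union, Set.mem_inter_iff,
      Set.mem_iInter, Finset.mem_range, mem_setOf_eq, mem_compl_iff]
  rw [this]
  exact ((hp n).inter (MeasurableSet.biInter (Finset.range n).countable_toSet
      fun m _ => (hp m).compl)).union ((MeasurableSet.const _).inter
      (MeasurableSet.iInter fun i => (hp i).compl))

lemma measurable_Lout (B : Set ℝ) (hB : MeasurableSet B) (x w : ℝ) :
    Measurable fun u => Lout B x u w := by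
  have hN : Measurable fun u => sInf {i : ℕ | 1 ≤ i ∧ Lpt x u w i ∉ B} := by
    apply measurable_sInf_set
    intro i
    have h1 : Measurable fun u : ℝ => Lpt x u w i := by
      unfold Lpt
      exact (measurable_const.sub measurable_id').sub measurable_const
    exact (MeasurableSet.const _).inter (h1 hB.compl)
  have heq : (fun u => Lout B x u w)
      = fun u => x - u - (((sInf {i : ℕ | 1 ≤ i ∧ Lpt x u w i ∉ B} : ℕ) : ℝ) - 1) * w := rfl
  rw [heq]
  exact (measurable_const.sub measurable_id').sub
    (((measurable_from_top.comp hN).sub measurable_const).mul measurable_const)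

lemma measurable_Rout (B : Set ℝ) (hB : MeasurableSet B) (x w : ℝ) :
    Measurable fun u => Rout B x u w := by
  have hN : Measurable fun u => sInf {i : ℕ | 1 ≤ i ∧ Rpt x u w i ∉ B} := by
    apply measurable_sInf_set
    intro i
    have h1 : Measurable fun u : ℝ => Rpt x u w i := by
      unfold Rpt
      exact (measurable_const.sub measurable_id').add measurable_const
    exact (MeasurableSet.const _).inter (h1 hB.compl)
  have heq : (fun u => Rout B x u w)
      = fun u => x - u + ((sInf {i : ℕ | 1 ≤ i ∧ Rpt x u w i ∉ B} : ℕ) : ℝ) * w := rfl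
  rw [heq]
  exact (measurable_const.sub measurable_id').add
    ((measurable_from_top.comp hN).mul measurable_const)

lemma refl_sets (S : Set ℝ) (α θ u w : ℝ) :
    {i : ℕ | 1 ≤ i ∧ Lpt θ u w i ∉ (fun s => α - s) '' S}
      = {i : ℕ | 1 ≤ i ∧ Rpt (α - θ) (w - u) w i ∉ S} := by
  ext i
  have hmem : ∀ y : ℝ, y ∈ (fun s => α - s) '' S ↔ α - y ∈ S := by
    intro y
    constructor
    · rintro ⟨s, hs, rfl⟩; simpa using hs
    · intro h; exact ⟨α - y, h, by ring⟩
  have hpt : α - Lpt θ u w i = Rpt (α - θ) (w - u) w i := by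
    simp only [Lpt, Rpt]; ring
  simp only [mem_setOf_eq, hmem, hpt]

lemma refl_sets' (S : Set ℝ) (α θ u w : ℝ) :
    {i : ℕ | 1 ≤ i ∧ Rpt θ u w i ∉ (fun s => α - s) '' S}
      = {i : ℕ | 1 ≤ i ∧ Lpt (α - θ) (w - u) w i ∉ S} := by
  ext i
  have hmem : ∀ y : ℝ, y ∈ (fun s => α - s) '' S ↔ α - y ∈ S := by
    intro y
    constructor
    · rintro ⟨s, hs, rfl⟩; simpa using hs
    · intro h; exact ⟨α - y, h, by ring⟩
  have hpt : α - Rpt θ u w i = Lpt (α - θ) (w - u) w i := by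
    simp only [Lpt, Rpt]; ring
  simp only [mem_setOf_eq, hmem, hpt]

lemma refl_Lout (S : Set ℝ) (α θ u w : ℝ) :
    Lout ((fun s => α - s) '' S) θ u w = α - Rout S (α - θ) (w - u) w := by
  unfold Lout Rout
  rw [refl_sets]
  simp only [Lpt, Rpt]; ring

lemma refl_Rout (S : Set ℝ) (α θ u w : ℝ) :
    Rout ((fun s => α - s) '' S) θ u w = α - Lout S (α - θ) (w - u) w := by
  unfold Lout Rout
  rw [refl_sets']
  simp only [Lpt, Rpt]; ring

/-- Reflection equivariance of the stepping-out distribution (hyperparameter `m = ∞`):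
the stepping-out distribution for `α − S` started at `θ` is the pushforward under
`(ℓ, r) ↦ (α − r, α − ℓ)` of the stepping-out distribution for `S` started at `α − θ`. -/
theorem stmt6 {Ω : Type*} [MeasurableSpace Ω] (P : Measure Ω) [IsProbabilityMeasure P]
    (w : ℝ) (hw : 0 < w) (S : Set ℝ) (hSmeas : MeasurableSet S)
    (hSne : S.Nonempty) (hSb : Bornology.IsBounded S)
    (Υ : Ω → ℝ) (hΥmeas : Measurable Υ)
    (hΥ : Measure.map Υ P = (ENNReal.ofReal w)⁻¹ • volume.restrict (Ioo 0 w))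
    (α : ℝ) (f : ℝ × ℝ → ℝ≥0∞) (hf : Measurable f) (θ : ℝ) :
    ∫⁻ ω, f (Lout ((fun s => α - s) '' S) θ (Υ ω) w,
             Rout ((fun s => α - s) '' S) θ (Υ ω) w) ∂P
      = ∫⁻ ω, f (α - Rout S (α - θ) (Υ ω) w, α - Lout S (α - θ) (Υ ω) w) ∂P := by
  set g : ℝ → ℝ≥0∞ := fun u => f (α - Rout S (α - θ) u w, α - Lout S (α - θ) u w) with hg
  have hgmeas : Measurable g :=
    hf.comp ((measurable_const.sub (measurable_Rout S hSmeas (α - θ) w)).prodMk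
      (measurable_const.sub (measurable_Lout S hSmeas (α - θ) w)))
  have hLHS : ∀ ω, f (Lout ((fun s => α - s) '' S) θ (Υ ω) w,
      Rout ((fun s => α - s) '' S) θ (Υ ω) w) = g (w - Υ ω) := by
    intro ω
    rw [refl_Lout, refl_Rout]
  simp only [hLHS]
  have hsub : Measurable fun x : ℝ => w - x := measurable_const.sub measurable_id'
  have hmap : Measure.map (fun ω => w - Υ ω) P = Measure.map Υ P := by
    have h1 : Measure.map (fun ω => w - Υ ω) P
        = Measure.map (fun x => w - x) (Measure.map Υ P) :=
      (Measure.map_map hsub hΥmeas).symm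
    rw [h1, hΥ, Measure.map_smul]
    congr 1
    have hpre : (fun x : ℝ => w - x) ⁻¹' (Ioo 0 w) = Ioo 0 w := by
      ext x
      simp only [mem_preimage, mem_Ioo]
      constructor <;> (intro h; constructor <;> linarith [h.1, h.2])
    conv_lhs => rw [← hpre]
    rw [← Measure.restrict_map hsub measurableSet_Ioo,
      Measure.map_sub_left_eq_self volume w]
  calc ∫⁻ ω, g (w - Υ ω) ∂P
      = ∫⁻ u, g u ∂(Measure.map (fun ω => w - Υ ω) P) :=
        (lintegral_map hgmeas (measurable_const.sub hΥmeas)).symm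
    _ = ∫⁻ u, g u ∂(Measure.map Υ P) := by rw [hmap]
    _ = ∫⁻ ω, g (Υ ω) ∂P := lintegral_map hgmeas hΥmeas
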